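/- For every nonzero z = |z|(cos \alpha, sin \alpha) in R^2 and every k > 0, \int_0^{2\pi} sin^2(\theta) e^{i k |z| cos(\theta - \alpha)} d\theta = \pi J_0(k|z|) + \pi cos(2\alpha) J_2(k|z|). -/

import Mathlib

open Real MeasureTheory intervalIntegral

/-- Bessel function of the first kind of order 0. -/
noncomputable def besselJ0 (t : ℝ) : ℝ :=
  ∑' p : ℕ, (-1 : ℝ)^p / ((Nat.factorial p : ℝ))^2 * (t/2)^(2*p)

/-- Bessel function of the first kind of order 2. -/
noncomputable def besselJ2 (t : ℝ) : ℝ :=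
  ∑' p : ℕ, (-1 : ℝ)^p / ((Nat.factorial p : ℝ) * (Nat.factorial (2 + p) : ℝ)) * (t/2)^(2 + 2*p)

noncomputable def W (n : ℕ) : ℝ := ∫ x in (0:ℝ)..(2*π), Real.cos x ^ n

lemma W_rec (n : ℕ) : W (n+2) = (n+1)/(n+2) * W n := by
  unfold W
  rw [integral_cos_pow]
  simp [Real.sin_two_pi]

lemma W_even (p : ℕ) : W (2*p) = 2*π * (Nat.factorial (2*p)) / (4^p * (Nat.factorial p)^2) := by
  induction p with
  | zero => simpa using (by simp [W] : W 0 = 2*π)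
  | succ q ih =>
      rw [show 2*(q+1) = (2*q)+2 from by ring, W_rec, ih]
      have h1 : (Nat.factorial (2*q+2) : ℝ) = (2*(q:ℝ)+2)*(2*q+1)*(Nat.factorial (2*q)) := by
        rw [show 2*q+2 = (2*q+1)+1 from by ring, Nat.factorial_succ, Nat.factorial_succ]
        push_cast; ring
      rw [h1, show (Nat.factorial (q+1) : ℝ) = ((q:ℝ)+1)*(Nat.factorial q) from by
        rw [Nat.factorial_succ]; push_cast; ring]
      have hq : ((Nat.factorial q : ℝ)) ≠ 0 := Nat.cast_ne_zero.2 q.factorial_ne_zero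
      have h4 : (4:ℝ)^q ≠ 0 := by positivity
      field_simp
      push_cast; ring


lemma W_one : W 1 = 0 := by simp [W]

lemma W_odd (p : ℕ) : W (2*p+1) = 0 := by
  induction p with
  | zero => simpa using W_one
  | succ q ih =>
      have h : 2*(q+1)+1 = (2*q+1)+2 := by ring
      rw [h, W_rec, ih, mul_zero]

lemma hasSum_weighted (ρ : ℝ) (w : ℝ → ℝ) (hw : Continuous w) (hb : ∀ x, |w x| ≤ 1) :
    HasSum (fun n : ℕ => (Complex.I*ρ)^n / (Nat.factorial n : ℂ) *
        ((∫ x in (0:ℝ)..(2*π), w x * Real.cos x ^ n : ℝ) : ℂ))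
      (∫ x in (0:ℝ)..(2*π), (w x : ℂ) * Complex.exp (Complex.I * (ρ * Real.cos x))) := by
  have h2π : (0:ℝ) ≤ 2*π := by positivity
  set μ := volume.restrict (Set.Ioc (0:ℝ) (2*π)) with hμ
  set F : ℕ → ℝ → ℂ := fun n x => (w x : ℂ) * ((Complex.I * ((ρ:ℂ) * Real.cos x))^n / (Nat.factorial n : ℂ)) with hF
  have hcont : ∀ n, Continuous (F n) := by
    intro n; fun_prop
  have hint : ∀ n, Integrable (F n) μ := by
    intro n
    rw [hμ, ← IntegrableOn]
    exact ((hcont n).integrableOn_Icc (a := 0) (b := 2*π)).mono_set Set.Ioc_subset_Icc_self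
  have hbound : ∀ n x, ‖F n x‖ ≤ |ρ|^n / (Nat.factorial n) := by
    intro n x
    have h1 : ‖F n x‖ = |w x| * (‖Complex.I * ((ρ:ℂ) * Real.cos x)‖^n / (Nat.factorial n)) := by
      simp [hF, Complex.norm_real, abs_div, abs_pow]
    rw [h1]
    have h2 : ‖Complex.I * ((ρ:ℂ) * Real.cos x)‖ ≤ |ρ| := by
      simp only [norm_mul, Complex.norm_I, one_mul, Complex.norm_real, Real.norm_eq_abs, abs_mul]
      nlinarith [abs_nonneg ρ, Real.abs_cos_le_one x, abs_nonneg (Real.cos x)]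
    calc |w x| * (‖Complex.I * ((ρ:ℂ) * Real.cos x)‖^n / (Nat.factorial n))
        ≤ 1 * (|ρ|^n / (Nat.factorial n)) := by
          apply mul_le_mul (hb x) _ (by positivity) one_pos.le
          apply div_le_div_of_nonneg_right ?_ ?_ |>.trans_eq rfl
          · exact pow_le_pow_left₀ (norm_nonneg _) h2 n
          · positivity
      _ = _ := one_mul _
  have hsum : Summable fun n : ℕ => ∫ a, ‖F n a‖ ∂μ := by
    apply Summable.of_nonneg_of_le (fun n => integral_nonneg (fun a => norm_nonneg _))
      (fun n => ?_) (((Real.summable_pow_div_factorial |ρ|).mul_left (2*π)))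
    calc ∫ a, ‖F n a‖ ∂μ ≤ ∫ _, |ρ|^n / (Nat.factorial n) ∂μ := by
          apply integral_mono ((hint n).norm) (integrable_const _) (fun x => hbound n x)
      _ = 2*π * (|ρ|^n / (Nat.factorial n)) := by
          rw [MeasureTheory.integral_const]
          simp [hμ, Real.volume_Ioc, ENNReal.toReal_ofReal h2π]
          exact Or.inl pi_pos.le
  have key := hasSum_integral_of_summable_integral_norm (μ := μ) hint hsum
  have hpt : ∀ x : ℝ, (∑' n, F n x) = (w x : ℂ) * Complex.exp (Complex.I * ((ρ:ℂ) * Real.cos x)) := by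
    intro x
    rw [hF]
    simp only
    rw [tsum_mul_left]
    congr 1
    rw [Complex.exp_eq_exp_ℂ, NormedSpace.exp_eq_tsum_div]
  have hI : ∀ n, ∫ a, F n a ∂μ = (Complex.I*ρ)^n / (Nat.factorial n : ℂ) *
      ((∫ x in (0:ℝ)..(2*π), w x * Real.cos x ^ n : ℝ) : ℂ) := by
    intro n
    have : ∀ x, F n x = (Complex.I*ρ)^n / (Nat.factorial n : ℂ) * (((w x * Real.cos x ^ n : ℝ)) : ℂ) := by
      intro x
      rw [hF]
      simp only
      push_cast
      ring
    rw [show (fun a => F n a) = fun x => (Complex.I*ρ)^n / (Nat.factorial n : ℂ) * (((w x * Real.cos x ^ n : ℝ)) : ℂ) from funext this]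
    rw [MeasureTheory.integral_const_mul]
    congr 1
    rw [hμ, ← intervalIntegral.integral_of_le h2π, intervalIntegral.integral_ofReal]
  rw [intervalIntegral.integral_of_le h2π]
  have : (∫ x in Set.Ioc (0:ℝ) (2*π), (w x : ℂ) * Complex.exp (Complex.I * ((ρ:ℂ) * Real.cos x))) = ∫ a, (∑' n, F n a) ∂μ := by
    rw [hμ]; exact integral_congr_ae (Filter.Eventually.of_forall fun x => (hpt x).symm)
  rw [this]
  convert key using 1
  · rfl
  exact funext fun n => (hI n).symm

lemma Isq (ρ : ℝ) (p : ℕ) : (Complex.I*ρ)^(2*p) = (((-1:ℝ)^p * ρ^(2*p) : ℝ) : ℂ) := by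
  rw [pow_mul]
  have : (Complex.I*ρ)^2 = ((-(ρ^2) : ℝ) : ℂ) := by
    push_cast
    rw [mul_pow, Complex.I_sq]
    ring
  rw [this, ← Complex.ofReal_pow]
  congr 1
  rw [neg_pow, ← pow_mul]

lemma half_pow (ρ : ℝ) (n p : ℕ) (h : n = 2*p) : (ρ/2)^n = ρ^n / 4^p := by
  subst h
  rw [div_pow, pow_mul]
  norm_num [pow_mul]

lemma termJ0 (ρ : ℝ) (p : ℕ) :
    (Complex.I*ρ)^(2*p) / (Nat.factorial (2*p) : ℂ) * ((W (2*p) : ℝ) : ℂ)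
      = ((2*π * ((-1 : ℝ)^p / ((Nat.factorial p : ℝ))^2 * (ρ/2)^(2*p)) : ℝ) : ℂ) := by
  rw [Isq, W_even]
  have h1 : ((Nat.factorial (2*p) : ℝ)) ≠ 0 := Nat.cast_ne_zero.2 (Nat.factorial_ne_zero _)
  have h2 : ((Nat.factorial p : ℝ)) ≠ 0 := Nat.cast_ne_zero.2 (Nat.factorial_ne_zero _)
  have h4 : (4:ℝ)^p ≠ 0 := by positivity
  have hr : (-1:ℝ)^p * ρ^(2*p) / (Nat.factorial (2*p)) *
      (2*π * (Nat.factorial (2*p)) / (4^p * (Nat.factorial p)^2))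
      = 2*π * ((-1)^p / ((Nat.factorial p : ℝ))^2 * (ρ/2)^(2*p)) := by
    rw [half_pow ρ (2*p) p rfl]
    field_simp
  exact_mod_cast hr


lemma W_idx (a b : ℕ) (h : a = b) : W a = W b := by rw [h]

lemma termJ2 (ρ : ℝ) (q : ℕ) :
    (Complex.I*ρ)^(2*(q+1)) / ((Nat.factorial (2*(q+1)) : ℝ) : ℂ) *
        (((2*W (2*(q+1)+2) - W (2*(q+1)) : ℝ)) : ℂ)
      = (((-(2*π)) * ((-1:ℝ)^q / ((Nat.factorial q : ℝ) * (Nat.factorial (2+q) : ℝ)) * (ρ/2)^(2+2*q)) : ℝ) : ℂ) := by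
  rw [Isq]
  rw [W_idx (2*(q+1)+2) (2*(q+2)) (by ring), W_even, W_even]
  have hq : ((Nat.factorial q : ℝ)) ≠ 0 := Nat.cast_ne_zero.2 (Nat.factorial_ne_zero _)
  have h22 : ((Nat.factorial (2*(q+1)) : ℝ)) ≠ 0 := Nat.cast_ne_zero.2 (Nat.factorial_ne_zero _)
  have h4 : (4:ℝ)^q ≠ 0 := by positivity
  have e1 : ((Nat.factorial (2*(q+2)) : ℝ)) = (2*(q:ℝ)+4)*(2*(q:ℝ)+3)*(Nat.factorial (2*(q+1))) := by
    have : 2*(q+2) = ((2*(q+1)+1)+1) := by ring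
    rw [this, Nat.factorial_succ, Nat.factorial_succ]
    push_cast; ring
  have e2 : ((Nat.factorial (q+2) : ℝ)) = ((q:ℝ)+2)*((q:ℝ)+1)*(Nat.factorial q) := by
    rw [show q+2 = (q+1)+1 from rfl, Nat.factorial_succ, Nat.factorial_succ]
    push_cast; ring
  have e3 : ((Nat.factorial (q+1) : ℝ)) = ((q:ℝ)+1)*(Nat.factorial q) := by
    rw [Nat.factorial_succ]; push_cast; ring
  have e4 : ((Nat.factorial (2+q) : ℝ)) = ((Nat.factorial (q+2) : ℝ)) := by rw [Nat.add_comm]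
  have hr : (-1:ℝ)^(q+1) * ρ^(2*(q+1)) / ((Nat.factorial (2*(q+1)) : ℝ)) *
      (2*(2*π * (Nat.factorial (2*(q+2))) / (4^(q+2) * (Nat.factorial (q+2))^2))
        - 2*π * (Nat.factorial (2*(q+1))) / (4^(q+1) * (Nat.factorial (q+1))^2))
      = (-(2*π)) * ((-1:ℝ)^q / ((Nat.factorial q : ℝ) * (Nat.factorial (2+q) : ℝ)) * (ρ/2)^(2+2*q)) := by
    rw [half_pow ρ (2+2*q) (q+1) (by ring), e4, e1, e2, e3]
    simp only [pow_succ]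
    field_simp
    ring
  exact_mod_cast hr

lemma term0J2 : 2*W (2*0+2) - W (2*0) = 0 := by
  have h1 : W (2*0+2) = π := by
    rw [W_idx (2*0+2) (2*1) (by ring), W_even]
    norm_num [Nat.factorial]
    ring
  have h0 : W (2*0) = 2*π := by rw [W_even]; norm_num [Nat.factorial]
  rw [h1, h0]; ring

lemma two_mul_inj : Function.Injective (fun k : ℕ => 2*k) := fun a b h => by simp only [] at h; omega

lemma intA (ρ : ℝ) :
    (∫ x in (0:ℝ)..(2*π), Complex.exp (Complex.I * ((ρ:ℂ) * Real.cos x)))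
      = ((2*π * besselJ0 ρ : ℝ) : ℂ) := by
  have h := hasSum_weighted ρ (fun _ => 1) continuous_const (fun x => by norm_num)
  simp only [Complex.ofReal_one, one_mul] at h
  have h' : HasSum (fun n : ℕ => (Complex.I*ρ)^n / (Nat.factorial n : ℂ) * ((W n : ℝ) : ℂ))
      (∫ x in (0:ℝ)..(2*π), Complex.exp (Complex.I * ((ρ:ℂ) * Real.cos x))) := h
  set f : ℕ → ℂ := fun n => (Complex.I*ρ)^n / (Nat.factorial n : ℂ) * ((W n : ℝ) : ℂ) with hf
  have hsum : Summable f := h'.summable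
  rw [← h'.tsum_eq, ← tsum_even_add_odd (hsum.comp_injective two_mul_inj)
    (by
      have : (fun k : ℕ => f (2*k+1)) = fun _ => 0 := by
        funext k; simp [hf, W_odd]
      rw [this]; exact summable_zero)]
  have hodd : (∑' k : ℕ, f (2*k+1)) = 0 := by
    have : (fun k : ℕ => f (2*k+1)) = fun _ => 0 := by funext k; simp [hf, W_odd]
    rw [this, tsum_zero]
  have heven : (∑' k : ℕ, f (2*k)) = ((2*π * besselJ0 ρ : ℝ) : ℂ) := by
    have : (fun k : ℕ => f (2*k)) = fun p =>
        ((2*π * ((-1 : ℝ)^p / ((Nat.factorial p : ℝ))^2 * (ρ/2)^(2*p)) : ℝ) : ℂ) := by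
      funext p; exact termJ0 ρ p
    rw [this, ← Complex.ofReal_tsum]
    congr 1
    rw [besselJ0, ← tsum_mul_left]
  rw [hodd, heven, add_zero]

lemma intB (ρ : ℝ) :
    (∫ x in (0:ℝ)..(2*π), ((Real.cos (2*x) : ℝ) : ℂ) * Complex.exp (Complex.I * ((ρ:ℂ) * Real.cos x)))
      = ((-(2*π) * besselJ2 ρ : ℝ) : ℂ) := by
  have h := hasSum_weighted ρ (fun x => Real.cos (2*x)) (by fun_prop) (fun x => Real.abs_cos_le_one _)
  have hinner : ∀ n : ℕ, (∫ x in (0:ℝ)..(2*π), Real.cos (2*x) * Real.cos x ^ n) = 2*W (n+2) - W n := by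
    intro n
    have hcongr : ∀ x : ℝ, Real.cos (2*x) * Real.cos x ^ n = 2*(Real.cos x ^ (n+2)) - Real.cos x ^ n := by
      intro x
      rw [Real.cos_two_mul]
      ring
    rw [intervalIntegral.integral_congr (fun x _ => hcongr x), intervalIntegral.integral_sub
      (by apply Continuous.intervalIntegrable; fun_prop)
      (by apply Continuous.intervalIntegrable; fun_prop),
      intervalIntegral.integral_const_mul]
    rfl
  simp only [hinner] at h
  set f : ℕ → ℂ := fun n => (Complex.I*ρ)^n / (Nat.factorial n : ℂ) * (((2*W (n+2) - W n : ℝ)) : ℂ) with hf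
  have hsum : Summable f := h.summable
  have hoddz : (fun k : ℕ => f (2*k+1)) = fun _ => 0 := by
    funext k
    have h1 : (2*k+1)+2 = 2*(k+1)+1 := by ring
    simp [hf, h1, W_odd]
  rw [← h.tsum_eq, ← tsum_even_add_odd (hsum.comp_injective two_mul_inj)
    (by rw [hoddz]; exact summable_zero)]
  have hodd : (∑' k : ℕ, f (2*k+1)) = 0 := by rw [hoddz, tsum_zero]
  have heven : (∑' k : ℕ, f (2*k)) = ((-(2*π) * besselJ2 ρ : ℝ) : ℂ) := by
    have hse : Summable (fun k : ℕ => f (2*k)) := hsum.comp_injective two_mul_inj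
    rw [Summable.tsum_eq_zero_add hse]
    have h0 : f (2*0) = 0 := by
      have := term0J2
      simp only [hf]
      rw [show (2*0+2 : ℕ) = (2*0)+2 from rfl] at this
      rw [this]
      simp
    have hterm : (fun q : ℕ => f (2*(q+1))) = fun q =>
        (((-(2*π)) * ((-1:ℝ)^q / ((Nat.factorial q : ℝ) * (Nat.factorial (2+q) : ℝ)) * (ρ/2)^(2+2*q)) : ℝ) : ℂ) := by
      funext q; exact termJ2 ρ q
    rw [h0, zero_add, hterm, ← Complex.ofReal_tsum]
    congr 1
    rw [besselJ2, ← tsum_mul_left]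
  rw [hodd, heven, add_zero]

lemma intC (ρ : ℝ) :
    (∫ x in (0:ℝ)..(2*π), ((Real.sin (2*x) : ℝ) : ℂ) * Complex.exp (Complex.I * ((ρ:ℂ) * Real.cos x)))
      = 0 := by
  set g : ℝ → ℂ := fun x => ((Real.sin (2*x) : ℝ) : ℂ) * Complex.exp (Complex.I * ((ρ:ℂ) * Real.cos x)) with hg
  have h1 : (∫ x in (0:ℝ)..(2*π), g (2*π - x)) = ∫ x in (0:ℝ)..(2*π), g x := by
    rw [intervalIntegral.integral_comp_sub_left g (2*π)]
    norm_num
  have h2 : ∀ x, g (2*π - x) = - g x := by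
    intro x
    have hs : Real.sin (2*(2*π - x)) = - Real.sin (2*x) := by
      have : 2*(2*π - x) = (-(2*x)) + 2*π + 2*π := by ring
      rw [this, Real.sin_add_two_pi, Real.sin_add_two_pi, Real.sin_neg]
    have hc : Real.cos (2*π - x) = Real.cos x := Real.cos_two_pi_sub x
    simp only [hg, hs, hc]
    push_cast
    ring
  have h3 : (∫ x in (0:ℝ)..(2*π), g (2*π - x)) = - ∫ x in (0:ℝ)..(2*π), g x := by
    rw [intervalIntegral.integral_congr (fun x _ => h2 x)]
    exact intervalIntegral.integral_neg
  have := h1.symm.trans h3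
  have h4 : (2:ℂ) * ∫ x in (0:ℝ)..(2*π), g x = 0 := by
    rw [two_mul]
    nth_rewrite 1 [this]
    ring
  exact (mul_eq_zero.mp h4).resolve_left two_ne_zero

theorem circle_integral_sin_sq_exp (z : ℝ × ℝ) (hz : z ≠ 0) (α k : ℝ) (hk : 0 < k)
    (hzα : z = (‖z‖ * Real.cos α, ‖z‖ * Real.sin α)) :
    ∫ θ in (0:ℝ)..(2*π),
        ((Real.sin θ)^2 : ℂ) * Complex.exp (Complex.I * (k * ‖z‖ * Real.cos (θ - α)))
      = (π * besselJ0 (k * ‖z‖) : ℝ) + (π * Real.cos (2*α) * besselJ2 (k * ‖z‖) : ℝ) := by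
  set ρ : ℝ := k * ‖z‖ with hρ
  set f : ℝ → ℂ := fun θ => ((Real.sin θ : ℂ))^2 * Complex.exp (Complex.I * ((ρ:ℂ) * Real.cos (θ - α))) with hf
  have hgoal : (∫ θ in (0:ℝ)..(2*π),
      ((Real.sin θ)^2 : ℂ) * Complex.exp (Complex.I * (k * ‖z‖ * Real.cos (θ - α))))
      = ∫ θ in (0:ℝ)..(2*π), f θ := by
    apply intervalIntegral.integral_congr
    intro θ _
    simp only [hf]
    congr 1
    congr 1
    rw [hρ]
    push_cast
    ring
  rw [hgoal]
  have hper : Function.Periodic f (2*π) := by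
    intro θ
    simp only [hf]
    have h1 : Real.sin (θ + 2*π) = Real.sin θ := Real.sin_add_two_pi θ
    have h2 : θ + 2*π - α = (θ - α) + 2*π := by ring
    rw [h1, h2, Real.cos_add_two_pi]
  have hshift : (∫ θ in (0:ℝ)..(2*π), f θ) = ∫ x in (0:ℝ)..(2*π), f (x + α) := by
    rw [intervalIntegral.integral_comp_add_right f α]
    have := hper.intervalIntegral_add_eq 0 α
    simp only [zero_add] at this
    rw [this, zero_add, add_comm α (2*π)]
  rw [hshift]
  set E : ℝ → ℂ := fun x => Complex.exp (Complex.I * ((ρ:ℂ) * Real.cos x)) with hE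
  have hsplit : ∀ x : ℝ, f (x + α) = (1/2 : ℂ) * E x
      + (-(Real.cos (2*α))/2 : ℂ) * (((Real.cos (2*x) : ℝ) : ℂ) * E x)
      + ((Real.sin (2*α))/2 : ℂ) * (((Real.sin (2*x) : ℝ) : ℂ) * E x) := by
    intro x
    have hsin : (Real.sin (x + α))^2 = 1/2 - Real.cos (2*x) * Real.cos (2*α)/2
        + Real.sin (2*x) * Real.sin (2*α)/2 := by
      rw [Real.sin_sq, Real.cos_sq, show 2*(x+α) = 2*x + 2*α from by ring, Real.cos_add]
      ring
    simp only [hf, hE, show x + α - α = x from by ring]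
    rw [show ((Real.sin (x+α) : ℂ))^2 = (((Real.sin (x+α))^2 : ℝ) : ℂ) from by push_cast; ring, hsin]
    push_cast
    ring
  rw [intervalIntegral.integral_congr (fun x _ => hsplit x)]
  have hEc : Continuous E := by fun_prop
  have hi1 : IntervalIntegrable (fun x => (1/2 : ℂ) * E x) volume 0 (2*π) := by
    apply Continuous.intervalIntegrable; fun_prop
  have hi2 : IntervalIntegrable (fun x => (-(Real.cos (2*α))/2 : ℂ) * (((Real.cos (2*x) : ℝ) : ℂ) * E x)) volume 0 (2*π) := by
    apply Continuous.intervalIntegrable; fun_prop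
  have hi3 : IntervalIntegrable (fun x => ((Real.sin (2*α))/2 : ℂ) * (((Real.sin (2*x) : ℝ) : ℂ) * E x)) volume 0 (2*π) := by
    apply Continuous.intervalIntegrable; fun_prop
  rw [intervalIntegral.integral_add (hi1.add hi2) hi3, intervalIntegral.integral_add hi1 hi2,
    intervalIntegral.integral_const_mul, intervalIntegral.integral_const_mul,
    intervalIntegral.integral_const_mul]
  rw [hE]
  rw [intA ρ, intB ρ, intC ρ]
  push_cast
  ring
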